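/- For a genus-2 branch with multiplicity n = 4, one has β̄₂ = β₁ + β₂; the ℂ[[x]]-basis of values for Γ is (n, β₁, n + β₂, β̄₂), it coincides with the S-basis of Λ_Γ, the 𝒞^w-basis of values is (n, β₁, n + β₂), the 𝒞-basis of values is (n, β₁), and n + β₂ ∉ S_Γ so Λ_Γ ≠ S_Γ. -/
import Mathlib


/-- `T` is a `𝒞`-collection. -/
def IsCCollection (S₀ : Set ℕ) (g : ℕ) (bb : ℕ → ℕ) (T : Set ℕ) : Prop :=
  (∀ m ∈ T, 0 < m) ∧
  (∀ m ∈ T, ∀ s ∈ S₀, m + s ∈ T) ∧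
  (∀ m ∈ T, ∀ j, 1 ≤ j → j ≤ g → m ≤ bb j → ∀ k, j ≤ k → k ≤ g → m + bb k - bb j ∈ T)

/-- The smallest `𝒞`-collection containing `S`. -/
def genC (S₀ : Set ℕ) (g : ℕ) (bb : ℕ → ℕ) (S : Set ℕ) : Set ℕ :=
  ⋂₀ {T | IsCCollection S₀ g bb T ∧ S ⊆ T}

/-- `T` is a `𝒞^w`-collection. -/
def IsCwCollection (S₀ : Set ℕ) (g : ℕ) (β e bb : ℕ → ℕ) (T : Set ℕ) : Prop :=
  (∀ m ∈ T, 0 < m) ∧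
  (∀ m ∈ T, ∀ s ∈ S₀, m + s ∈ T) ∧
  (∀ lam ∈ T, ∀ l, 1 ≤ l → l < g → lam ≤ bb l → lam % e (l - 1) = β l % e (l - 1) →
    lam + bb (l + 1) - bb l ∈ T)

/-- The smallest `𝒞^w`-collection containing `S`. -/
def genCw (S₀ : Set ℕ) (g : ℕ) (β e bb : ℕ → ℕ) (S : Set ℕ) : Set ℕ :=
  ⋂₀ {T | IsCwCollection S₀ g β e bb T ∧ S ⊆ T}


def Pset (β1 β2 : ℕ) : Set ℕ :=
  {m | (m % 4 = 0 ∧ 4 ≤ m) ∨ (m % 4 = 2 ∧ β1 ≤ m) ∨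
       (m % 4 = β2 % 4 ∧ 4 + β2 ≤ m) ∨ (m % 4 = (β2 + 2) % 4 ∧ β1 + β2 ≤ m)}

def Rset (β1 β2 : ℕ) : Set ℕ :=
  {s | s % 4 = 0 ∨ (s % 4 = 2 ∧ β1 ≤ s) ∨ (s % 2 = 1 ∧ β1 + β2 ≤ s)}

set_option linter.unusedSectionVars false
section PsetLemmas
variable {β1 β2 : ℕ} (hm1 : β1 % 4 = 2) (hm2 : β2 % 2 = 1) (h41 : 4 < β1) (h12 : β1 < β2)
include hm1 hm2 h41 h12

lemma Rset_add {a b : ℕ} (ha : a ∈ Rset β1 β2) (hb : b ∈ Rset β1 β2) :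
    a + b ∈ Rset β1 β2 := by
  simp only [Rset, Set.mem_setOf_eq] at *; omega

lemma PR_add {a b : ℕ} (ha : a ∈ Pset β1 β2) (hb : b ∈ Rset β1 β2) :
    a + b ∈ Pset β1 β2 := by
  simp only [Pset, Rset, Set.mem_setOf_eq] at *; omega

lemma Pset4 : (4 : ℕ) ∈ Pset β1 β2 :=
  Or.inl (by norm_num)

lemma Psetβ1 : β1 ∈ Pset β1 β2 := by
  simp only [Pset, Set.mem_setOf_eq]; omega

lemma Pset4β2 : 4 + β2 ∈ Pset β1 β2 := by
  simp only [Pset, Set.mem_setOf_eq]; omega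

lemma Psetβ12 : β1 + β2 ∈ Pset β1 β2 := by
  simp only [Pset, Set.mem_setOf_eq]; omega

lemma Rsetβ1 : β1 ∈ Rset β1 β2 := by
  simp only [Rset, Set.mem_setOf_eq]; omega

lemma Rsetβ12 : β1 + β2 ∈ Rset β1 β2 := by
  simp only [Rset, Set.mem_setOf_eq]; omega

lemma Pset_pos {m : ℕ} (hm : m ∈ Pset β1 β2) : 0 < m := by
  simp only [Pset, Set.mem_setOf_eq] at hm; omega

lemma Pset_ge4 {m : ℕ} (hm : m ∈ Pset β1 β2) : 4 ≤ m := by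
  simp only [Pset, Set.mem_setOf_eq] at hm; omega

lemma Pset_stepdown {x : ℕ} (hx : x ∈ Pset β1 β2) (n1 : x ≠ 4) (n2 : x ≠ β1)
    (n3 : x ≠ 4 + β2) (n4 : x ≠ β1 + β2) :
    x - 4 ∈ Pset β1 β2 ∧ x - 4 < x ∧ x = x - 4 + 1 * 4 ∧ x - 4 + 4 = x := by
  simp only [Pset, Set.mem_setOf_eq] at *; omega

lemma Pset_noDecomp {k' s k : ℕ} (hk' : k' ∈ Pset β1 β2) (hs : s ∈ Rset β1 β2)
    (hlt : k' < k) (hk : k = 4 ∨ k = β1 ∨ k = 4 + β2 ∨ k = β1 + β2) : k ≠ k' + s := by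
  simp only [Pset, Rset, Set.mem_setOf_eq] at *; omega

lemma Pset_cases {m : ℕ} (hm : m ∈ Pset β1 β2) :
    ∃ t, m = 4 + 4 * t ∨ m = β1 + 4 * t ∨ m = (4 + β2) + 4 * t ∨ m = (β1 + β2) + 4 * t := by
  simp only [Pset, Set.mem_setOf_eq] at hm
  rcases hm with ⟨h1, h2⟩ | ⟨h1, h2⟩ | ⟨h1, h2⟩ | ⟨h1, h2⟩
  · exact ⟨(m - 4) / 4, by omega⟩
  · exact ⟨(m - β1) / 4, by omega⟩
  · exact ⟨(m - (4 + β2)) / 4, by omega⟩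
  · exact ⟨(m - (β1 + β2)) / 4, by omega⟩

lemma Pset_add_ne_β1 {m s : ℕ} (hm : m ∈ Pset β1 β2) (hne : m ≠ β1)
    (hs : s ∈ Rset β1 β2) : m + s ≠ β1 := by
  simp only [Pset, Rset, Set.mem_setOf_eq] at *; omega

lemma Pset_add_ne_4β2 {m s : ℕ} (hm : m ∈ Pset β1 β2) (hne : m ≠ 4 + β2)
    (hs : s ∈ Rset β1 β2) : m + s ≠ 4 + β2 := by
  simp only [Pset, Rset, Set.mem_setOf_eq] at *; omega

lemma Pset_forceβ1 {m : ℕ} (hm : m ∈ Pset β1 β2) (hle : m ≤ β1)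
    (hmod : m % 4 = β1 % 4) : m = β1 := by
  simp only [Pset, Set.mem_setOf_eq] at hm; omega

lemma Pset_small_addβ2 {m : ℕ} (hm : m ∈ Pset β1 β2) (hle : m ≤ β1) (hne : m ≠ β1) :
    m + β2 ∈ Pset β1 β2 ∧ m + β2 ≠ β1 := by
  simp only [Pset, Set.mem_setOf_eq] at *; omega

lemma Pset_rule12 {m : ℕ} (hm : m ∈ Pset β1 β2) (hle : m ≤ β1) :
    m + (β1 + β2) - β1 ∈ Pset β1 β2 := by
  simp only [Pset, Set.mem_setOf_eq] at *; omega

lemma not_Rset_4β2 : 4 + β2 ∉ Rset β1 β2 := by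
  simp only [Rset, Set.mem_setOf_eq]; omega

lemma mul4_Rset (r : ℕ) : r * 4 ∈ Rset β1 β2 :=
  Or.inl (Nat.mul_mod_left r 4)

end PsetLemmas

lemma genC_min {S₀ : Set ℕ} {g : ℕ} {bb : ℕ → ℕ} {S T : Set ℕ}
    (hT : IsCCollection S₀ g bb T) (hS : S ⊆ T) : genC S₀ g bb S ⊆ T :=
  Set.sInter_subset_of_mem ⟨hT, hS⟩

lemma mem_genC_self {S₀ : Set ℕ} {g : ℕ} {bb : ℕ → ℕ} {S : Set ℕ} {x : ℕ} (hx : x ∈ S) :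
    x ∈ genC S₀ g bb S :=
  Set.mem_sInter.mpr fun _ hT => hT.2 hx

lemma genC_add {S₀ : Set ℕ} {g : ℕ} {bb : ℕ → ℕ} {S : Set ℕ} {x s : ℕ}
    (hx : x ∈ genC S₀ g bb S) (hs : s ∈ S₀) : x + s ∈ genC S₀ g bb S :=
  Set.mem_sInter.mpr fun T hT => hT.1.2.1 x (Set.mem_sInter.mp hx T hT) s hs

lemma genC_rule {S₀ : Set ℕ} {g : ℕ} {bb : ℕ → ℕ} {S : Set ℕ} {x j k : ℕ}
    (hx : x ∈ genC S₀ g bb S) (h1 : 1 ≤ j) (h2 : j ≤ g) (h3 : x ≤ bb j)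
    (h4 : j ≤ k) (h5 : k ≤ g) : x + bb k - bb j ∈ genC S₀ g bb S :=
  Set.mem_sInter.mpr fun T hT => hT.1.2.2 x (Set.mem_sInter.mp hx T hT) j h1 h2 h3 k h4 h5

lemma genCw_min {S₀ : Set ℕ} {g : ℕ} {β e bb : ℕ → ℕ} {S T : Set ℕ}
    (hT : IsCwCollection S₀ g β e bb T) (hS : S ⊆ T) : genCw S₀ g β e bb S ⊆ T :=
  Set.sInter_subset_of_mem ⟨hT, hS⟩

lemma mem_genCw_self {S₀ : Set ℕ} {g : ℕ} {β e bb : ℕ → ℕ} {S : Set ℕ} {x : ℕ} (hx : x ∈ S) :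
    x ∈ genCw S₀ g β e bb S :=
  Set.mem_sInter.mpr fun _ hT => hT.2 hx

lemma genCw_add {S₀ : Set ℕ} {g : ℕ} {β e bb : ℕ → ℕ} {S : Set ℕ} {x s : ℕ}
    (hx : x ∈ genCw S₀ g β e bb S) (hs : s ∈ S₀) : x + s ∈ genCw S₀ g β e bb S :=
  Set.mem_sInter.mpr fun T hT => hT.1.2.1 x (Set.mem_sInter.mp hx T hT) s hs

lemma genCw_rule {S₀ : Set ℕ} {g : ℕ} {β e bb : ℕ → ℕ} {S : Set ℕ} {lam l : ℕ}
    (hx : lam ∈ genCw S₀ g β e bb S) (h1 : 1 ≤ l) (h2 : l < g) (h3 : lam ≤ bb l)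
    (h4 : lam % e (l - 1) = β l % e (l - 1)) :
    lam + bb (l + 1) - bb l ∈ genCw S₀ g β e bb S :=
  Set.mem_sInter.mpr fun T hT => hT.1.2.2 lam (Set.mem_sInter.mp hx T hT) l h1 h2 h3 h4

/-- For a genus-2 branch with multiplicity `n = 4`: `β̄₂ = β₁ + β₂`; the `ℂ[[x]]`-basis of
values is `(4, β₁, 4 + β₂, β̄₂)`, it coincides with the `S`-basis of `Λ_Γ`; the
`𝒞^w`-basis of values is `(4, β₁, 4 + β₂)`; the `𝒞`-basis of values is `(4, β₁)`; and
`4 + β₂ ∉ S_Γ`, so `Λ_Γ ≠ S_Γ`. -/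
theorem genus_two_mult_four (β1 β2 : ℕ)
    (h41 : 4 < β1) (h12 : β1 < β2)
    (hg1 : Nat.gcd 4 β1 = 2) (hg2 : Nat.gcd 2 β2 = 1)
    (β e bb : ℕ → ℕ)
    (hβ1 : β 1 = β1) (hβ2 : β 2 = β2)
    (he0 : e 0 = 4) (he1 : e 1 = Nat.gcd (e 0) (β 1)) (he2 : e 2 = Nat.gcd (e 1) (β 2))
    (hbb1 : bb 1 = β1) (hbb2 : bb 2 = 2 * bb 1 - β 1 + β 2)
    (S₀ : Set ℕ)
    (hS₀ : S₀ = (AddSubmonoid.closure {4, bb 1, bb 2} : AddSubmonoid ℕ))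
    (SΓ : Set ℕ) (hSΓ : SΓ = {m | 0 < m ∧ m ∈ S₀})
    (Λ : Set ℕ) (hΛ : Λ = genC S₀ 2 bb {4, β1}) :
    bb 2 = β1 + β2 ∧
    {k | k ∈ Λ ∧ ¬ ∃ k' ∈ Λ, k' < k ∧ ∃ r : ℕ, 0 < r ∧ k = k' + r * 4}
      = {4, β1, 4 + β2, β1 + β2} ∧
    {k | k ∈ Λ ∧ ¬ ∃ k' ∈ Λ, k' < k ∧ ∃ s ∈ S₀, k = k' + s}
      = {4, β1, 4 + β2, β1 + β2} ∧
    {k | k ∈ Λ ∧ k ∉ genCw S₀ 2 β e bb (Λ ∩ Set.Iio k)}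
      = {4, β1, 4 + β2} ∧
    {k | k ∈ Λ ∧ k ∉ genC S₀ 2 bb (Λ ∩ Set.Iio k)}
      = {4, β1} ∧
    (4 + β2) ∉ SΓ ∧ Λ ≠ SΓ := by
  -- basic arithmetic facts
  have h2d : 2 ∣ β1 := hg1 ▸ Nat.gcd_dvd_right 4 β1
  have h4nd : ¬ (4 ∣ β1) := by
    intro h
    have := Nat.dvd_gcd (dvd_refl 4) h
    rw [hg1] at this
    omega
  have hm1 : β1 % 4 = 2 := by omega
  have hm2 : β2 % 2 = 1 := by
    have : ¬ (2 ∣ β2) := by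
      intro h
      have := Nat.dvd_gcd (dvd_refl 2) h
      rw [hg2] at this
      omega
    omega
  have hbb2' : bb 2 = β1 + β2 := by rw [hbb2, hbb1, hβ1, hβ2]; omega
  -- membership of generators in S₀
  have h4S : (4 : ℕ) ∈ S₀ := by
    rw [hS₀]
    exact AddSubmonoid.subset_closure (by simp)
  have hmul4 : ∀ t : ℕ, 4 * t ∈ S₀ := by
    intro t
    rw [hS₀]
    have h4 : (4 : ℕ) ∈ AddSubmonoid.closure ({4, bb 1, bb 2} : Set ℕ) :=
      AddSubmonoid.subset_closure (by simp)
    have := (AddSubmonoid.closure ({4, bb 1, bb 2} : Set ℕ)).nsmul_mem h4 t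
    simpa [nsmul_eq_mul, Nat.mul_comm] using this
  -- S₀ ⊆ Rset
  have hS₀R : ∀ s ∈ S₀, s ∈ Rset β1 β2 := by
    have hRmono : AddSubmonoid.closure ({4, bb 1, bb 2} : Set ℕ) ≤
        { carrier := Rset β1 β2,
          add_mem' := fun ha hb => Rset_add hm1 hm2 h41 h12 ha hb,
          zero_mem' := Or.inl rfl } := by
      rw [AddSubmonoid.closure_le]
      intro x hx
      simp only [Set.mem_insert_iff, Set.mem_singleton_iff] at hx
      rcases hx with rfl | rfl | rfl
      · exact Or.inl (by norm_num)
      · show bb 1 ∈ Rset β1 β2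
        rw [hbb1]; exact Rsetβ1 hm1 hm2 h41 h12
      · show bb 2 ∈ Rset β1 β2
        rw [hbb2']; exact Rsetβ12 hm1 hm2 h41 h12
    intro s hs
    rw [hS₀] at hs
    exact hRmono hs
  -- Λ ⊆ Pset
  have hPcol : IsCCollection S₀ 2 bb (Pset β1 β2) := by
    refine ⟨fun m hm => Pset_pos hm1 hm2 h41 h12 hm,
      fun m hm s hs => PR_add hm1 hm2 h41 h12 hm (hS₀R s hs), ?_⟩
    intro m hm j hj1 hj2 hmj k hjk hk2
    interval_cases j <;> interval_cases k
    · simpa using hm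
    · rw [hbb1] at hmj
      rw [hbb2', hbb1]
      exact Pset_rule12 hm1 hm2 h41 h12 hm hmj
    · simpa using hm
  have hΛP : ∀ m ∈ Λ, m ∈ Pset β1 β2 := by
    intro m hm
    rw [hΛ] at hm
    refine genC_min hPcol ?_ hm
    intro x hx
    simp only [Set.mem_insert_iff, Set.mem_singleton_iff] at hx
    rcases hx with rfl | rfl
    · exact Pset4 hm1 hm2 h41 h12
    · exact Psetβ1 hm1 hm2 h41 h12
  -- generators in Λ
  have h4Λ : (4 : ℕ) ∈ Λ := by
    rw [hΛ]; exact mem_genC_self (by simp)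
  have hb1Λ : β1 ∈ Λ := by
    rw [hΛ]; exact mem_genC_self (by simp)
  have hb2Λ : 4 + β2 ∈ Λ := by
    rw [hΛ]
    have h0 : (4:ℕ) ∈ genC S₀ 2 bb {4, β1} := mem_genC_self (by simp)
    have h := genC_rule (j := 1) (k := 2) h0
      (le_refl 1) (by omega) (by rw [hbb1]; omega) (by omega) (le_refl 2)
    have heq : 4 + bb 2 - bb 1 = 4 + β2 := by rw [hbb1, hbb2']; omega
    rwa [heq] at h
  have hb12Λ : β1 + β2 ∈ Λ := by
    rw [hΛ]
    have h0 : β1 ∈ genC S₀ 2 bb {4, β1} := mem_genC_self (by simp)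
    have h := genC_rule (j := 1) (k := 2) h0
      (le_refl 1) (by omega) hbb1.ge (by omega) (le_refl 2)
    have heq : β1 + bb 2 - bb 1 = β1 + β2 := by rw [hbb1, hbb2']; omega
    rwa [heq] at h
  have hΛ4t : ∀ x ∈ Λ, ∀ t : ℕ, x + 4 * t ∈ Λ := by
    intro x hx t
    rw [hΛ] at hx ⊢
    exact genC_add hx (hmul4 t)
  -- Pset ⊆ Λ
  have hPΛ : ∀ m ∈ Pset β1 β2, m ∈ Λ := by
    intro m hm
    obtain ⟨t, h | h | h | h⟩ := Pset_cases hm1 hm2 h41 h12 hm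
    · rw [h]; exact hΛ4t 4 h4Λ t
    · rw [h]; exact hΛ4t β1 hb1Λ t
    · rw [h]; exact hΛ4t (4 + β2) hb2Λ t
    · rw [h]; exact hΛ4t (β1 + β2) hb12Λ t
  refine ⟨hbb2', ?_, ?_, ?_, ?_, ?_, ?_⟩
  · -- ℂ[[x]]-basis
    ext x
    simp only [Set.mem_setOf_eq, Set.mem_insert_iff, Set.mem_singleton_iff]
    constructor
    · rintro ⟨hxΛ, hmin⟩
      by_contra hne
      push_neg at hne
      obtain ⟨n1, n2, n3, n4⟩ := hne
      obtain ⟨hs1, hs2, hs3, hs4⟩ := Pset_stepdown hm1 hm2 h41 h12 (hΛP x hxΛ) n1 n2 n3 n4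
      exact hmin ⟨x - 4, hPΛ (x - 4) hs1, hs2, 1, Nat.one_pos, hs3⟩
    · have key : ∀ y, y ∈ Λ → (y = 4 ∨ y = β1 ∨ y = 4 + β2 ∨ y = β1 + β2) →
          y ∈ Λ ∧ ¬ ∃ k' ∈ Λ, k' < y ∧ ∃ r : ℕ, 0 < r ∧ y = k' + r * 4 := by
        intro y hy hcase
        refine ⟨hy, ?_⟩
        rintro ⟨k', hk', hlt, r, hr, heq⟩
        exact Pset_noDecomp hm1 hm2 h41 h12 (hΛP k' hk')
          (mul4_Rset hm1 hm2 h41 h12 r) hlt hcase heq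
      rintro (h | h | h | h)
      · rw [h]; exact key 4 h4Λ (Or.inl rfl)
      · rw [h]; exact key β1 hb1Λ (Or.inr (Or.inl rfl))
      · rw [h]; exact key (4 + β2) hb2Λ (Or.inr (Or.inr (Or.inl rfl)))
      · rw [h]; exact key (β1 + β2) hb12Λ (Or.inr (Or.inr (Or.inr rfl)))
  · -- S-basis
    ext x
    simp only [Set.mem_setOf_eq, Set.mem_insert_iff, Set.mem_singleton_iff]
    constructor
    · rintro ⟨hxΛ, hmin⟩
      by_contra hne
      push_neg at hne
      obtain ⟨n1, n2, n3, n4⟩ := hne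
      obtain ⟨hs1, hs2, hs3, hs4⟩ := Pset_stepdown hm1 hm2 h41 h12 (hΛP x hxΛ) n1 n2 n3 n4
      exact hmin ⟨x - 4, hPΛ (x - 4) hs1, hs2, 4, h4S, hs4.symm⟩
    · have key : ∀ y, y ∈ Λ → (y = 4 ∨ y = β1 ∨ y = 4 + β2 ∨ y = β1 + β2) →
          y ∈ Λ ∧ ¬ ∃ k' ∈ Λ, k' < y ∧ ∃ s ∈ S₀, y = k' + s := by
        intro y hy hcase
        refine ⟨hy, ?_⟩
        rintro ⟨k', hk', hlt, s, hs, heq⟩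
        exact Pset_noDecomp hm1 hm2 h41 h12 (hΛP k' hk') (hS₀R s hs) hlt hcase heq
      rintro (h | h | h | h)
      · rw [h]; exact key 4 h4Λ (Or.inl rfl)
      · rw [h]; exact key β1 hb1Λ (Or.inr (Or.inl rfl))
      · rw [h]; exact key (4 + β2) hb2Λ (Or.inr (Or.inr (Or.inl rfl)))
      · rw [h]; exact key (β1 + β2) hb12Λ (Or.inr (Or.inr (Or.inr rfl)))
  · -- 𝒞^w-basis
    ext x
    simp only [Set.mem_setOf_eq, Set.mem_insert_iff, Set.mem_singleton_iff]
    constructor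
    · rintro ⟨hxΛ, hnot⟩
      by_contra hne
      push_neg at hne
      obtain ⟨n1, n2, n3⟩ := hne
      apply hnot
      by_cases hx4 : x = β1 + β2
      · subst hx4
        have hβ1mem : β1 ∈ genCw S₀ 2 β e bb (Λ ∩ Set.Iio (β1 + β2)) :=
          mem_genCw_self ⟨hb1Λ, Set.mem_Iio.mpr (by omega)⟩
        have h := genCw_rule (l := 1) hβ1mem (le_refl 1) (by omega)
          hbb1.ge (by rw [hβ1])
        have heq : β1 + bb (1 + 1) - bb 1 = β1 + β2 := by
          show β1 + bb 2 - bb 1 = β1 + β2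
          rw [hbb1, hbb2']; omega
        rwa [heq] at h
      · obtain ⟨hs1, hs2, hs3, hs4⟩ :=
          Pset_stepdown hm1 hm2 h41 h12 (hΛP x hxΛ) n1 n2 n3 hx4
        have h0 : x - 4 ∈ genCw S₀ 2 β e bb (Λ ∩ Set.Iio x) :=
          mem_genCw_self ⟨hPΛ (x - 4) hs1, Set.mem_Iio.mpr hs2⟩
        have h := genCw_add h0 h4S
        rwa [hs4] at h
    · rintro (h | h | h) <;> rw [h]
      · refine ⟨h4Λ, fun hmem => ?_⟩
        have hE : IsCwCollection S₀ 2 β e bb ∅ := ⟨by simp, by simp, by simp⟩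
        have hsub : Λ ∩ Set.Iio 4 ⊆ (∅ : Set ℕ) := by
          rintro m ⟨hm, hlt⟩
          simp only [Set.mem_Iio] at hlt
          exact absurd (Pset_ge4 hm1 hm2 h41 h12 (hΛP m hm)) (by omega)
        exact absurd (genCw_min hE hsub hmem) (Set.notMem_empty 4)
      · refine ⟨hb1Λ, fun hmem => ?_⟩
        have hcol : IsCwCollection S₀ 2 β e bb {m | m ∈ Pset β1 β2 ∧ m ≠ β1} := by
          refine ⟨fun m hm => Pset_pos hm1 hm2 h41 h12 hm.1, ?_, ?_⟩
          · rintro m ⟨hm, hne⟩ s hs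
            exact ⟨PR_add hm1 hm2 h41 h12 hm (hS₀R s hs),
              Pset_add_ne_β1 hm1 hm2 h41 h12 hm hne (hS₀R s hs)⟩
          · rintro lam ⟨hm, hne⟩ l hl1 hl2 hlam hmod
            exfalso
            have hl : l = 1 := by omega
            subst hl
            rw [hbb1] at hlam
            rw [show (1:ℕ) - 1 = 0 from rfl, he0, hβ1] at hmod
            exact hne (Pset_forceβ1 hm1 hm2 h41 h12 hm hlam hmod)
        have hsub : Λ ∩ Set.Iio β1 ⊆ {m | m ∈ Pset β1 β2 ∧ m ≠ β1} := by
          rintro m ⟨hm, hlt⟩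
          simp only [Set.mem_Iio] at hlt
          exact ⟨hΛP m hm, Nat.ne_of_lt hlt⟩
        exact (genCw_min hcol hsub hmem).2 rfl
      · refine ⟨hb2Λ, fun hmem => ?_⟩
        have hcol : IsCwCollection S₀ 2 β e bb {m | m ∈ Pset β1 β2 ∧ m ≠ 4 + β2} := by
          refine ⟨fun m hm => Pset_pos hm1 hm2 h41 h12 hm.1, ?_, ?_⟩
          · rintro m ⟨hm, hne⟩ s hs
            exact ⟨PR_add hm1 hm2 h41 h12 hm (hS₀R s hs),
              Pset_add_ne_4β2 hm1 hm2 h41 h12 hm hne (hS₀R s hs)⟩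
          · rintro lam ⟨hm, hne⟩ l hl1 hl2 hlam hmod
            have hl : l = 1 := by omega
            subst hl
            rw [hbb1] at hlam
            rw [show (1:ℕ) - 1 = 0 from rfl, he0, hβ1] at hmod
            have hlameq : lam = β1 := Pset_forceβ1 hm1 hm2 h41 h12 hm hlam hmod
            rw [hlameq]
            have heq : β1 + bb (1 + 1) - bb 1 = β1 + β2 := by
              show β1 + bb 2 - bb 1 = β1 + β2
              rw [hbb1, hbb2']; omega
            rw [heq]
            exact ⟨Psetβ12 hm1 hm2 h41 h12, by omega⟩
        have hsub : Λ ∩ Set.Iio (4 + β2) ⊆ {m | m ∈ Pset β1 β2 ∧ m ≠ 4 + β2} := by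
          rintro m ⟨hm, hlt⟩
          simp only [Set.mem_Iio] at hlt
          exact ⟨hΛP m hm, Nat.ne_of_lt hlt⟩
        exact (genCw_min hcol hsub hmem).2 rfl
  · -- 𝒞-basis
    ext x
    simp only [Set.mem_setOf_eq, Set.mem_insert_iff, Set.mem_singleton_iff]
    constructor
    · rintro ⟨hxΛ, hnot⟩
      by_contra hne
      push_neg at hne
      obtain ⟨n1, n2⟩ := hne
      apply hnot
      by_cases hx3 : x = 4 + β2
      · subst hx3
        have h4mem : (4 : ℕ) ∈ genC S₀ 2 bb (Λ ∩ Set.Iio (4 + β2)) :=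
          mem_genC_self ⟨h4Λ, Set.mem_Iio.mpr (by omega)⟩
        have h := genC_rule (j := 1) (k := 2) h4mem (le_refl 1) (by omega)
          (by rw [hbb1]; omega) (by omega) (le_refl 2)
        have heq : 4 + bb 2 - bb 1 = 4 + β2 := by rw [hbb1, hbb2']; omega
        rwa [heq] at h
      · by_cases hx4 : x = β1 + β2
        · subst hx4
          have hβ1mem : β1 ∈ genC S₀ 2 bb (Λ ∩ Set.Iio (β1 + β2)) :=
            mem_genC_self ⟨hb1Λ, Set.mem_Iio.mpr (by omega)⟩
          have h := genC_rule (j := 1) (k := 2) hβ1mem (le_refl 1) (by omega)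
            hbb1.ge (by omega) (le_refl 2)
          have heq : β1 + bb 2 - bb 1 = β1 + β2 := by rw [hbb1, hbb2']; omega
          rwa [heq] at h
        · obtain ⟨hs1, hs2, hs3, hs4⟩ :=
            Pset_stepdown hm1 hm2 h41 h12 (hΛP x hxΛ) n1 n2 hx3 hx4
          have h0 : x - 4 ∈ genC S₀ 2 bb (Λ ∩ Set.Iio x) :=
            mem_genC_self ⟨hPΛ (x - 4) hs1, Set.mem_Iio.mpr hs2⟩
          have h := genC_add h0 h4S
          rwa [hs4] at h
    · rintro (h | h) <;> rw [h]
      · refine ⟨h4Λ, fun hmem => ?_⟩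
        have hE : IsCCollection S₀ 2 bb ∅ := ⟨by simp, by simp, by simp⟩
        have hsub : Λ ∩ Set.Iio 4 ⊆ (∅ : Set ℕ) := by
          rintro m ⟨hm, hlt⟩
          simp only [Set.mem_Iio] at hlt
          exact absurd (Pset_ge4 hm1 hm2 h41 h12 (hΛP m hm)) (by omega)
        exact absurd (genC_min hE hsub hmem) (Set.notMem_empty 4)
      · refine ⟨hb1Λ, fun hmem => ?_⟩
        have hcol : IsCCollection S₀ 2 bb {m | m ∈ Pset β1 β2 ∧ m ≠ β1} := by
          refine ⟨fun m hm => Pset_pos hm1 hm2 h41 h12 hm.1, ?_, ?_⟩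
          · rintro m ⟨hm, hne⟩ s hs
            exact ⟨PR_add hm1 hm2 h41 h12 hm (hS₀R s hs),
              Pset_add_ne_β1 hm1 hm2 h41 h12 hm hne (hS₀R s hs)⟩
          · rintro m ⟨hm, hne⟩ j hj1 hj2 hmj k hjk hk2
            interval_cases j <;> interval_cases k
            · simp only [Nat.add_sub_cancel]
              exact ⟨hm, hne⟩
            · rw [hbb1] at hmj
              have heq : m + bb 2 - bb 1 = m + β2 := by rw [hbb1, hbb2']; omega
              rw [heq]
              exact Pset_small_addβ2 hm1 hm2 h41 h12 hm hmj hne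
            · simp only [Nat.add_sub_cancel]
              exact ⟨hm, hne⟩
        have hsub : Λ ∩ Set.Iio β1 ⊆ {m | m ∈ Pset β1 β2 ∧ m ≠ β1} := by
          rintro m ⟨hm, hlt⟩
          simp only [Set.mem_Iio] at hlt
          exact ⟨hΛP m hm, Nat.ne_of_lt hlt⟩
        exact (genC_min hcol hsub hmem).2 rfl
  · -- 4 + β2 ∉ SΓ
    rw [hSΓ]
    rintro ⟨-, hmem⟩
    exact not_Rset_4β2 hm1 hm2 h41 h12 (hS₀R _ hmem)
  · -- Λ ≠ SΓ
    intro h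
    rw [hSΓ] at h
    have h2 : 4 + β2 ∈ {m | 0 < m ∧ m ∈ S₀} := h ▸ hb2Λ
    exact not_Rset_4β2 hm1 hm2 h41 h12 (hS₀R _ h2.2)
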